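/- The measure ν_N on E defined by ν_N({η}) = Z^{−1}∏_{i=1}^K ∏_{j=0}^{η(i)−1} (N−1+Kpj)/(j+1) (with Z a normalizing constant) is reversible for the complete graph Fleming-Viot generator: it satisfies the detailed balance equations ν_N({η})C(η, T_{i→j}η) = ν_N({T_{i→j}η})C(T_{i→j}η, η) for all η ∈ E with η(i) ≥ 1 and all i ≠ j, where C(η, T_{i→j}η) = η(i)(1/K + p·η(j)/(N−1)). -/

import Mathlib

/-- `move η i j` is the configuration `T_{i→j} η`. -/
def move {F : Type*} [DecidableEq F] (η : F → ℕ) (i j : F) : F → ℕ :=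
  fun k => if i = j then η k else if k = i then η i - 1 else if k = j then η j + 1 else η k

/-- The unnormalized reversible weight `∏_{i=1}^K ∏_{j=0}^{η(i)-1} (N-1+Kpj)/(j+1)`. -/
noncomputable def cgWeight (K N : ℕ) (p : ℝ) (η : Fin K → ℕ) : ℝ :=
  ∏ i, ∏ j ∈ Finset.range (η i), (((N : ℝ) - 1 + K * p * j) / (j + 1))

/-- The measure `ν_N({η}) = Z⁻¹ ∏_i ∏_{j<η(i)} (N-1+Kpj)/(j+1)` satisfies the detailed
balance equations `ν_N({η}) C(η, T_{i→j}η) = ν_N({T_{i→j}η}) C(T_{i→j}η, η)` for the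
complete graph Fleming-Viot jump rates `C(η, T_{i→j}η) = η(i)(1/K + p η(j)/(N-1))`. -/
theorem stmt_10 (K N : ℕ) (hK : 1 ≤ K) (hN : 2 ≤ N) (p : ℝ) (hp : 0 < p)
    (Z : ℝ) (hZ : 0 < Z) (η : Fin K → ℕ) (hη : ∑ i, η i = N)
    (i j : Fin K) (hij : i ≠ j) (hi : 1 ≤ η i) :
    (Z⁻¹ * cgWeight K N p η) *
        ((η i : ℝ) * (1 / (K : ℝ) + p * (η j : ℝ) / ((N : ℝ) - 1))) =
      (Z⁻¹ * cgWeight K N p (move η i j)) *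
        ((move η i j j : ℝ) * (1 / (K : ℝ) + p * (move η i j i : ℝ) / ((N : ℝ) - 1))) := by
  set g : ℕ → ℝ := fun n => ∏ m ∈ Finset.range n, (((N : ℝ) - 1 + K * p * m) / (m + 1))
    with hg
  have hmi : move η i j i = η i - 1 := by simp [move, hij]
  have hmj : move η i j j = η j + 1 := by simp [move, hij, hij.symm]
  have hjmem : j ∈ (Finset.univ : Finset (Fin K)).erase i :=
    Finset.mem_erase.2 ⟨hij.symm, Finset.mem_univ j⟩
  have hsplit : ∀ ζ : Fin K → ℕ, cgWeight K N p ζ =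
      g (ζ i) * (g (ζ j) * ∏ k ∈ (Finset.univ.erase i).erase j, g (ζ k)) := by
    intro ζ
    rw [cgWeight, ← Finset.mul_prod_erase Finset.univ _ (Finset.mem_univ i),
      ← Finset.mul_prod_erase _ _ hjmem]
  have hR : ∏ k ∈ (Finset.univ.erase i).erase j, g (move η i j k)
      = ∏ k ∈ (Finset.univ.erase i).erase j, g (η k) := by
    refine Finset.prod_congr rfl fun k hk => ?_
    have hki : k ≠ i := Finset.mem_erase.1 (Finset.mem_erase.1 hk).2 |>.1
    have hkj : k ≠ j := (Finset.mem_erase.1 hk).1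
    simp [move, hij, hki, hkj]
  rw [hsplit, hsplit, hmi, hmj, hR]
  -- rewrite g (η i) and g (η j + 1) via prod_range_succ
  have hai : η i = (η i - 1) + 1 := (Nat.succ_pred_eq_of_pos hi).symm
  have hgi : g (η i) = g (η i - 1) * (((N : ℝ) - 1 + K * p * (η i - 1 : ℕ)) / ((η i - 1 : ℕ) + 1)) := by
    rw [hg]; conv_lhs => rw [hai]
    exact Finset.prod_range_succ _ _
  have hgj : g (η j + 1) = g (η j) * (((N : ℝ) - 1 + K * p * (η j : ℕ)) / ((η j : ℕ) + 1)) :=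
    Finset.prod_range_succ _ _
  rw [hgi, hgj]
  have hcast : ((η i - 1 : ℕ) : ℝ) = (η i : ℝ) - 1 := by
    rw [Nat.cast_sub hi]; norm_num
  rw [hcast]
  have hK0 : (K : ℝ) ≠ 0 := Nat.cast_ne_zero.2 (by omega)
  have hN1 : (N : ℝ) - 1 ≠ 0 := by
    have : (2 : ℝ) ≤ (N : ℝ) := by exact_mod_cast hN
    linarith
  have hb1 : ((η j : ℝ) + 1) ≠ 0 := by positivity
  have hai0 : ((η i : ℝ)) ≠ 0 := Nat.cast_ne_zero.2 (by omega)
  have hai1 : ((η i : ℝ) - 1) + 1 ≠ 0 := by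
    have : (1 : ℝ) ≤ (η i : ℝ) := by exact_mod_cast hi
    intro h; linarith
  field_simp
  push_cast
  ring
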